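/- Let f(x) = x^{p^i + p^k} over F = F_{p^n} with 0 ≤ i < k and p an odd prime. Then f is planar if and only if (p^n − 1)/gcd(p^n − 1, p^{k−i} − 1) is odd. -/

import Mathlib

def IsPlanar {F : Type*} [Field F] (f : F → F) : Prop :=
  ∀ a : F, a ≠ 0 → Function.Bijective fun x => f (x + a) - f x

theorem monomial_planar_iff_odd_index
    {F : Type*} [Field F] [Fintype F] (p n i k : ℕ) (hp : p.Prime) (hodd : Odd p)
    (hik : i < k) (hkn : k < n) (hcard : Fintype.card F = p ^ n) :
    IsPlanar (fun x : F => x ^ (p ^ i + p ^ k)) ↔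
      Odd ((p ^ n - 1) / Nat.gcd (p ^ n - 1) (p ^ (k - i) - 1)) := by
  classical
  haveI : Fact p.Prime := ⟨hp⟩
  have hp2 : p ≠ 2 := by
    rintro rfl
    exact (Nat.not_odd_iff_even.mpr (by decide)) hodd
  have h2p : 2 < p := lt_of_le_of_ne hp.two_le (Ne.symm hp2)
  haveI : Fact (2 < p) := ⟨h2p⟩
  -- characteristic of F is p
  haveI hcharp : CharP F p := by
    have := ringChar.charP F
    obtain ⟨m, hqprime, hcard'⟩ := FiniteField.card F (ringChar F)
    have hdvd : p ∣ (ringChar F) ^ (m : ℕ) := by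
      rw [← hcard', hcard]
      exact dvd_pow_self p (by omega)
    have : p = ringChar F :=
      (Nat.prime_dvd_prime_iff_eq hp hqprime).mp (hp.dvd_of_dvd_pow hdvd)
    rw [this]
    exact ringChar.charP F
  haveI : ExpChar F p := ExpChar.prime hp
  have hne : (-1 : F) ≠ 1 := CharP.neg_one_ne_one F p
  set e := p ^ (k - i) - 1 with he
  set N := p ^ n - 1 with hN
  set d := Nat.gcd N e with hd
  have hpk1 : 1 ≤ p ^ (k - i) := Nat.one_le_pow _ _ hp.pos
  have hpow3 : 3 ≤ p ^ (k - i) := by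
    calc 3 ≤ p := h2p
    _ = p ^ 1 := (pow_one p).symm
    _ ≤ p ^ (k - i) := Nat.pow_le_pow_right hp.pos (by omega)
  have he0 : 0 < e := by omega
  have hN0 : 0 < N := by
    have : 3 ≤ p ^ n := by
      calc 3 ≤ p := h2p
      _ = p ^ 1 := (pow_one p).symm
      _ ≤ p ^ n := Nat.pow_le_pow_right hp.pos (by omega)
    omega
  have hdN : d ∣ N := Nat.gcd_dvd_left N e
  have hde : d ∣ e := Nat.gcd_dvd_right N e
  have hd0 : 0 < d := Nat.gcd_pos_of_pos_left e hN0
  have hzN : ∀ z : F, z ≠ 0 → z ^ N = 1 := by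
    intro z hz
    have := FiniteField.pow_card_sub_one_eq_one z hz
    rwa [hcard] at this
  -- key exponent identity : p ^ k = (e + 1) * p ^ i
  have hkey : p ^ k = (e + 1) * p ^ i := by
    have : e + 1 = p ^ (k - i) := by omega
    rw [this, ← pow_add]
    congr 1
    omega
  have hodd_pi : Odd (p ^ i) := hodd.pow
  -- the solvability criterion
  have hsol : (∃ z : F, z ^ e = -1) ↔ Even (N / d) := by
    constructor
    · rintro ⟨z, hz⟩
      have hz0 : z ≠ 0 := by
        rintro rfl
        rw [zero_pow he0.ne'] at hz
        exact (neg_ne_zero.mpr (one_ne_zero)) hz.symm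
      have h1 : ((-1 : F)) ^ (N / d) = 1 := by
        have hNd' : d * (N / d) = N := Nat.mul_div_cancel' hdN
        have hed' : d * (e / d) = e := Nat.mul_div_cancel' hde
        have hmul : e * (N / d) = (e / d) * N := by
          calc e * (N / d) = (d * (e / d)) * (N / d) := by rw [hed']
            _ = (e / d) * (d * (N / d)) := by ring
            _ = (e / d) * N := by rw [hNd']
        calc ((-1 : F)) ^ (N / d) = (z ^ e) ^ (N / d) := by rw [hz]
          _ = z ^ (e * (N / d)) := (pow_mul z e (N / d)).symm
          _ = z ^ ((e / d) * N) := by rw [hmul]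
          _ = (z ^ N) ^ (e / d) := by rw [mul_comm, pow_mul]
          _ = 1 := by rw [hzN z hz0, one_pow]
      rcases Nat.even_or_odd (N / d) with h | h
      · exact h
      · rw [h.neg_one_pow] at h1
        exact absurd h1 hne
    · intro heven
      obtain ⟨g, hg⟩ := IsCyclic.exists_generator (α := Fˣ)
      have horder : orderOf g = N := by
        rw [orderOf_eq_card_of_forall_mem_zpowers hg, Nat.card_eq_fintype_card, Fintype.card_units, hcard]
      obtain ⟨t, ht⟩ := heven
      have hNd : d * (N / d) = N := Nat.mul_div_cancel' hdN
      have ht0 : 0 < t := by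
        have : 0 < N / d := Nat.div_pos (Nat.le_of_dvd hN0 hdN) hd0
        omega
      have hNtd : N = t * d * 2 := by rw [← hNd, ht]; ring
      -- u = g ^ (t * d) equals -1
      have hu2 : (g ^ (t * d)) ^ 2 = 1 := by
        rw [← pow_mul, ← hNtd, ← horder, pow_orderOf_eq_one]
      have hu1 : g ^ (t * d) ≠ 1 := by
        intro h
        have := orderOf_dvd_of_pow_eq_one h
        rw [horder] at this
        have hle := Nat.le_of_dvd (by positivity) this
        omega
      have huval : ((g ^ (t * d) : Fˣ) : F) = -1 := by
        have hv2 : ((g ^ (t * d) : Fˣ) : F) ^ 2 = 1 := by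
          rw [← Units.val_pow_eq_pow_val, hu2, Units.val_one]
        have hv1 : ((g ^ (t * d) : Fˣ) : F) ≠ 1 := by
          intro h
          exact hu1 (Units.ext (by rw [h, Units.val_one]))
        have hfac : (((g ^ (t * d) : Fˣ) : F) - 1) * (((g ^ (t * d) : Fˣ) : F) + 1) = 0 := by
          linear_combination hv2
        rcases mul_eq_zero.mp hfac with h | h
        · exact absurd (sub_eq_zero.mp h) hv1
        · exact eq_neg_of_add_eq_zero_left h
      -- Bezout
      set A := Nat.gcdA N e with hA
      set B := Nat.gcdB N e with hB
      have hbez : (d : ℤ) = N * A + e * B := Nat.gcd_eq_gcd_ab N e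
      refine ⟨((g ^ ((t : ℤ) * B) : Fˣ) : F), ?_⟩
      have hzpow : (g ^ ((t : ℤ) * B)) ^ e = g ^ (t * d) := by
        rw [← zpow_natCast (g ^ ((t : ℤ) * B)) e, ← zpow_mul]
        have hexp : (t : ℤ) * B * e = (t * d : ℕ) - ((t : ℤ) * A) * (N : ℕ) := by
          push_cast
          linear_combination (-(t : ℤ)) * hbez
        have hgN : g ^ N = 1 := by rw [← horder]; exact pow_orderOf_eq_one g
        rw [hexp, zpow_sub, zpow_natCast, mul_comm ((t : ℤ) * A) (N : ℤ), zpow_mul,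
          zpow_natCast, hgN]
        simp
      rw [← Units.val_pow_eq_pow_val, hzpow, huval]
  -- now the planarity criterion
  have hmain : ∀ a : F, a ≠ 0 →
      (Function.Bijective (fun x : F => (x + a) ^ (p ^ i + p ^ k) - x ^ (p ^ i + p ^ k)) ↔
        ¬ ∃ z : F, z ^ e = -1) := by
    intro a ha
    set L : F → F := fun x => a ^ (p ^ k) * x ^ (p ^ i) + a ^ (p ^ i) * x ^ (p ^ k) with hL
    have hexpand : (fun x : F => (x + a) ^ (p ^ i + p ^ k) - x ^ (p ^ i + p ^ k)) =
        ⇑(Equiv.addRight (a ^ (p ^ i) * a ^ (p ^ k))) ∘ L := by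
      funext x
      simp only [Function.comp_apply, Equiv.coe_addRight, hL]
      rw [pow_add, pow_add, add_pow_char_pow, add_pow_char_pow]
      ring
    rw [hexpand, Equiv.comp_bijective L (Equiv.addRight (a ^ (p ^ i) * a ^ (p ^ k))),
      ← Finite.injective_iff_bijective]
    set Lhom : F →+ F := AddMonoidHom.mk' L (by
      intro x y
      simp only [hL]
      rw [add_pow_char_pow, add_pow_char_pow]
      ring) with hLhom
    have hcoe : ⇑Lhom = L := rfl
    rw [← hcoe, injective_iff_map_eq_zero Lhom]
    constructor
    · rintro hinj ⟨z, hz⟩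
      have hz0 : z ≠ 0 := by
        rintro rfl
        rw [zero_pow he0.ne'] at hz
        exact (neg_ne_zero.mpr (one_ne_zero)) hz.symm
      have hzk : z ^ (p ^ k) = -(z ^ (p ^ i)) := by
        rw [hkey, pow_mul, pow_succ', mul_comm z (z ^ e), hz, neg_one_mul,
          hodd_pi.neg_pow]
      have h0 : Lhom (z * a) = 0 := by
        show L (z * a) = 0
        simp only [hL, mul_pow, hzk]
        ring
      have := hinj (z * a) h0
      exact ha (by simpa [hz0] using mul_eq_zero.mp this)
    · intro hno x hLx
      by_contra hx0
      apply hno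
      set w : F := x / a with hw
      have hw0 : w ≠ 0 := div_ne_zero hx0 ha
      have hx : x = w * a := by rw [hw, div_mul_cancel₀ x ha]
      have hLx' : L x = 0 := hLx
      rw [hx] at hLx'
      simp only [hL, mul_pow] at hLx'
      have hsum : w ^ (p ^ i) + w ^ (p ^ k) = 0 := by
        have haa : a ^ (p ^ i) * a ^ (p ^ k) ≠ 0 :=
          mul_ne_zero (pow_ne_zero _ ha) (pow_ne_zero _ ha)
        apply mul_left_cancel₀ haa
        rw [mul_zero]
        linear_combination hLx'
      have hwk : w ^ (p ^ i) * (w ^ e) ^ (p ^ i) = w ^ (p ^ i) * (-1) := by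
        rw [← pow_mul, ← pow_add]
        have : p ^ i + e * p ^ i = p ^ k := by rw [hkey]; ring
        rw [this, mul_neg_one]
        linear_combination hsum
      have hwe : (w ^ e) ^ (p ^ i) = (-1 : F) ^ (p ^ i) := by
        rw [hodd_pi.neg_one_pow]
        exact mul_left_cancel₀ (pow_ne_zero _ hw0) hwk
      have hfrob : Function.Injective fun z : F => z ^ p ^ i := by
        have := (iterateFrobenius F p i).injective
        exact fun a b h => this (by rw [iterateFrobenius_def, iterateFrobenius_def]; exact h)
      exact ⟨w, hfrob hwe⟩
  unfold IsPlanar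
  rw [← Nat.not_even_iff_odd, ← hsol]
  constructor
  · intro h
    exact (hmain 1 one_ne_zero).mp (h 1 one_ne_zero)
  · intro h a ha
    exact (hmain a ha).mpr h
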